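/- Fix f, b ∈ ℝ³ with f · b = 0 and ‖f‖² - ‖b‖² = 1 and b ≠ 0. The set of (c₀, c) ∈ ℝ × ℝ³ satisfying c₀ f + b × c = 0, f · c = 0, and ‖c‖² - c₀² = 1 has its c-component lying in the plane orthogonal to f, and in orthonormal coordinates (with first axis along b, second along f × b/‖f × b‖) the c-components form the ellipse {(u,v) : u² + v²/‖f‖² = 1}, with semi-axes of lengths 1 and ‖f‖. -/

import Mathlib

open Matrix

private lemma bac_cab (u v w : Fin 3 → ℝ) :
    crossProduct u (crossProduct v w) = (u ⬝ᵥ w) • v - (u ⬝ᵥ v) • w := by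
  simp_rw [cross_apply]
  funext i
  fin_cases i <;>
    simp [dotProduct, Fin.sum_univ_three] <;> ring

theorem stmt15 (f b : Fin 3 → ℝ) (hfb : f ⬝ᵥ b = 0)
    (hnorm : f ⬝ᵥ f - b ⬝ᵥ b = 1) (hb : b ≠ 0) :
    {c : Fin 3 → ℝ | ∃ c₀ : ℝ,
        c₀ • f + crossProduct b c = 0 ∧ f ⬝ᵥ c = 0 ∧ c ⬝ᵥ c - c₀ ^ 2 = 1} =
      {c : Fin 3 → ℝ | f ⬝ᵥ c = 0 ∧
        (c ⬝ᵥ ((Real.sqrt (b ⬝ᵥ b))⁻¹ • b)) ^ 2 +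
          (c ⬝ᵥ ((Real.sqrt (crossProduct f b ⬝ᵥ crossProduct f b))⁻¹ • crossProduct f b)) ^ 2
            / (f ⬝ᵥ f) = 1} := by
  have h0 : 0 ≤ b ⬝ᵥ b := by
    rw [dotProduct]
    exact Finset.sum_nonneg fun i _ => mul_self_nonneg (b i)
  have hB : 0 < b ⬝ᵥ b :=
    h0.lt_of_ne fun h => hb (dotProduct_self_eq_zero.mp h.symm)
  have hφ : 0 < f ⬝ᵥ f := by linarith
  have hK : crossProduct f b ⬝ᵥ crossProduct f b = (f ⬝ᵥ f) * (b ⬝ᵥ b) := by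
    rw [cross_dot_cross, hfb]; ring
  have hsB : ((Real.sqrt (b ⬝ᵥ b))⁻¹) ^ 2 = (b ⬝ᵥ b)⁻¹ := by
    rw [inv_pow, Real.sq_sqrt hB.le]
  have hsK : ((Real.sqrt (crossProduct f b ⬝ᵥ crossProduct f b))⁻¹) ^ 2
      = ((f ⬝ᵥ f) * (b ⬝ᵥ b))⁻¹ := by
    rw [inv_pow, Real.sq_sqrt, hK]
    rw [hK]; positivity
  ext c
  simp only [Set.mem_setOf_eq, dotProduct_smul, smul_eq_mul, mul_pow, hsB, hsK]
  constructor
  · rintro ⟨c₀, h1, h2, h3⟩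
    refine ⟨h2, ?_⟩
    have e2 : c₀ * (f ⬝ᵥ f) + f ⬝ᵥ crossProduct b c = 0 := by
      have := congrArg (fun v => f ⬝ᵥ v) h1
      simpa [dotProduct_add, dotProduct_smul, mul_comm] using this
    have e3 : (c₀ • f + crossProduct b c) ⬝ᵥ (c₀ • f + crossProduct b c) = 0 := by
      rw [h1, dotProduct_zero]
    rw [dotProduct_add, add_dotProduct, add_dotProduct, smul_dotProduct,
      dotProduct_smul, smul_dotProduct, dotProduct_smul, cross_dot_cross] at e3
    simp only [smul_eq_mul] at e3
    have htr : f ⬝ᵥ crossProduct b c = c ⬝ᵥ crossProduct f b := by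
      rw [triple_product_permutation f b c, triple_product_permutation b c f]
    have hcomm : b ⬝ᵥ c = c ⬝ᵥ b := dotProduct_comm b c
    have hcomm2 : crossProduct b c ⬝ᵥ f = f ⬝ᵥ crossProduct b c := dotProduct_comm _ f
    set φ := f ⬝ᵥ f
    set B := b ⬝ᵥ b
    set u := c ⬝ᵥ b
    set w := c ⬝ᵥ crossProduct f b
    set C := c ⬝ᵥ c
    rw [htr] at e2
    rw [hcomm2, htr, hcomm] at e3
    have hw : w = -(c₀ * φ) := by linarith
    have hC : C = 1 + c₀ ^ 2 := by linarith
    have hu : u ^ 2 = B - c₀ ^ 2 := by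
      linear_combination -e3 + 2*c₀*hw + B*hC - c₀^2*hnorm
    rw [hw, hu]
    field_simp
    ring
  · rintro ⟨h2, hell⟩
    set φ := f ⬝ᵥ f with hφdef
    set B := b ⬝ᵥ b with hBdef
    set u := c ⬝ᵥ b
    set w := c ⬝ᵥ crossProduct f b with hwdef
    have htr : f ⬝ᵥ crossProduct b c = w := by
      rw [hwdef, triple_product_permutation f b c, triple_product_permutation b c f]
    have hzero : crossProduct f (crossProduct b c) = 0 := by
      rw [bac_cab, h2, hfb]; simp
    have key : φ • crossProduct b c = w • f := by
      have h := bac_cab f f (crossProduct b c)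
      rw [hzero] at h
      simp only [map_zero] at h
      rw [htr, ← hφdef] at h
      linear_combination (norm := module) h
    have hbc : crossProduct b c = (w / φ) • f := by
      have h := congrArg (fun v => φ⁻¹ • v) key
      simpa [smul_smul, inv_mul_cancel₀ hφ.ne', div_eq_inv_mul] using h
    refine ⟨-(w / φ), ?_, h2, ?_⟩
    · rw [hbc]; module
    · have key2 : crossProduct b c ⬝ᵥ crossProduct b c = w ^ 2 / φ := by
        rw [hbc]
        rw [smul_dotProduct, dotProduct_smul, smul_eq_mul, smul_eq_mul, ← hφdef]
        field_simp
      have hlag : crossProduct b c ⬝ᵥ crossProduct b c = B * (c ⬝ᵥ c) - u ^ 2 := by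
        rw [cross_dot_cross, dotProduct_comm b c, ← hBdef]
        ring
      set C := c ⬝ᵥ c with hCdef
      have hBC : B * C * φ = u ^ 2 * φ + w ^ 2 := by
        have h : B * C - u ^ 2 = w ^ 2 / φ := by rw [← hlag, key2]
        field_simp at h
        linarith
      have hell' : u ^ 2 * φ ^ 2 + w ^ 2 = B * φ ^ 2 := by
        field_simp at hell
        have h : B * (u ^ 2 * φ ^ 2 + w ^ 2) = B * (B * φ ^ 2) := by
          linear_combination B * hell
        exact mul_left_cancel₀ hB.ne' h
      have hfin : B * (C * φ ^ 2) = B * (φ ^ 2 + w ^ 2) := by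
        linear_combination φ * hBC + hell' + w ^ 2 * hnorm
      have hC2 : C * φ ^ 2 = φ ^ 2 + w ^ 2 := mul_left_cancel₀ hB.ne' hfin
      field_simp
      linear_combination hC2
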